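/- Let h ≥ 2 and c ≥ 1 be integers. Assume that for every positive integer h' < h and every h'-regular pair (d';a') = (d_1',…,d_{c'}'; a_0',…,a_{n'}') with c' ≤ c, c' ≤ n' and a_i' ∤ h' for all i, one has δ(d';a') ≥ F^{h'}(a_0',…,a_{n'}'). Let (d;a) = (d_1,…,d_c; a_0,…,a_n) be an h-regular pair with c ≤ n and a_i ∤ h for all i, and suppose there exists a prime p dividing h such that δ̄(p) := δ(d;a) − δ(d(p);a(p)) ≤ 0. Then δ(d;a) ≥ F^h(a_0,…,a_n). -/

import Mathlib

open Finset

/-- The amplitude `δ` of the (sub)pair given by the degrees `d` indexed by `D`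
and the weights `a` indexed by `A`. -/
def deltaOn {ι κ : Type*} (D : Finset ι) (d : ι → ℕ) (A : Finset κ) (a : κ → ℕ) : ℤ :=
  (∑ j ∈ D, (d j : ℤ)) - ∑ i ∈ A, (a i : ℤ)

/-- The amplitude of a full pair `(d;a)`. -/
def deltaPair {ι κ : Type*} [Fintype ι] [Fintype κ] (d : ι → ℕ) (a : κ → ℕ) : ℤ :=
  deltaOn univ d univ a

/-- `h`-regularity of the (sub)pair given by the degrees `d` indexed by `D` and the
weights `a` indexed by `A`: for every nonempty subset `I ⊆ A` of the weight indices with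
`a_I := gcd_{i ∈ I} a i > 1`, either there are `|I|` pairwise distinct degree indices
`p ∈ D` with `a_I ∣ d p`, or `a_I ∣ h`. -/
def IsHRegularOn {ι κ : Type*} (h : ℕ) (D : Finset ι) (d : ι → ℕ)
    (A : Finset κ) (a : κ → ℕ) : Prop :=
  ∀ I : Finset κ, I ⊆ A → I.Nonempty → 1 < I.gcd a →
    (∃ P : Finset ι, P ⊆ D ∧ P.card = I.card ∧ ∀ j ∈ P, I.gcd a ∣ d j) ∨ I.gcd a ∣ h

/-- `h`-regularity of a full pair `(d;a)`. -/
def IsHRegularPair {ι κ : Type*} [Fintype ι] [Fintype κ] (h : ℕ) (d : ι → ℕ)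
    (a : κ → ℕ) : Prop :=
  IsHRegularOn h univ d univ a

/-- The generalised `1/h`-Frobenius number `F^h` of the weights indexed by `A`.
Letting `g` be the gcd of the weights, this is the largest integer `z` divisible by
`lcm g h` that is not a nonnegative integral combination of the weights; this agrees
with the renormalised definition `F^h = g * F^{h / gcd (g,h)} (a/g)`.  For `g = 1`
it is the largest multiple of `h` that is not a nonnegative integral combination of
the weights (so it equals `-h` if every positive multiple of `h` is such a combination),
and `frobOn 1 A a` is the ordinary Frobenius number `F` (so `F = -1` if some weight
equals `1`). -/
noncomputable def frobOn {κ : Type*} (h : ℕ) (A : Finset κ) (a : κ → ℕ) : ℤ :=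
  sSup {z : ℤ | ((Nat.lcm (A.gcd a) h : ℕ) : ℤ) ∣ z ∧
    ¬ ∃ x : κ → ℕ, ((∑ i ∈ A, x i * a i : ℕ) : ℤ) = z}

/-- The generalised `1/h`-Frobenius number `F^h` of a full tuple of weights. -/
noncomputable def frobNum {κ : Type*} [Fintype κ] (h : ℕ) (a : κ → ℕ) : ℤ :=
  frobOn h univ a
private lemma exists_gcd_bezout' {κ : Type*} (A : Finset κ) (a : κ → ℕ) :
    ∃ c : κ → ℤ, ∑ i ∈ A, c i * (a i : ℤ) = (↑(A.gcd a) : ℤ) := by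
  classical
  induction A using Finset.induction_on with
  | empty => exact ⟨0, by simp⟩
  | @insert i A hiA ih =>
    obtain ⟨c, hc⟩ := ih
    refine ⟨Function.update (fun j => (Nat.gcdB (a i) (A.gcd a)) * c j) i
      (Nat.gcdA (a i) (A.gcd a)), ?_⟩
    rw [Finset.sum_insert hiA, Finset.gcd_insert, Function.update_self]
    have hupd : ∀ j ∈ A, Function.update (fun j => (Nat.gcdB (a i) (A.gcd a)) * c j) i
        (Nat.gcdA (a i) (A.gcd a)) j * (a j : ℤ)
        = (Nat.gcdB (a i) (A.gcd a)) * (c j * (a j : ℤ)) := by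
      intro j hj
      rw [Function.update_of_ne (by rintro rfl; exact hiA hj), mul_assoc]
    rw [Finset.sum_congr rfl hupd, ← Finset.mul_sum, hc]
    show (Nat.gcdA (a i) (A.gcd a)) * (a i : ℤ) + _ = ((Nat.gcd (a i) (A.gcd a) : ℕ) : ℤ)
    rw [Nat.gcd_eq_gcd_ab]
    ring

private lemma rep_of_large' {κ : Type*} [Fintype κ] (a : κ → ℕ) :
    ∃ B : ℕ, ∀ m : ℕ, Finset.univ.gcd a ∣ m → B ≤ m →
      ∃ x : κ → ℕ, ∑ i, x i * a i = m := by
  classical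
  by_cases hg : Finset.univ.gcd a = 0
  · refine ⟨0, fun m hm _ => ?_⟩
    rw [hg, zero_dvd_iff] at hm
    exact ⟨0, by simp [hm]⟩
  have gpos : 0 < Finset.univ.gcd a := Nat.pos_of_ne_zero hg
  set g := Finset.univ.gcd a with hgdef
  obtain ⟨c, hc⟩ := exists_gcd_bezout' (Finset.univ : Finset κ) a
  set A := ∑ i, a i with hA
  have hgA : g ∣ A := Finset.dvd_sum fun i _ => Finset.gcd_dvd (Finset.mem_univ i)
  set K := A / g with hK
  have hKA : g * K = A := Nat.mul_div_cancel' hgA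
  set C := ∑ i, (c i).natAbs with hC
  have hcC : ∀ i, (c i).natAbs ≤ C := fun i =>
    Finset.single_le_sum (f := fun j => (c j).natAbs) (fun j _ => Nat.zero_le _)
      (Finset.mem_univ i)
  refine ⟨C * K * A + A, fun m hgm hBm => ?_⟩
  have hApos : 0 < A := by
    rcases Nat.eq_zero_or_pos A with h0 | h; swap
    · exact h
    · exfalso
      have : ∀ i ∈ Finset.univ, a i = 0 := by
        intro i _
        have := Finset.single_le_sum (f := a) (fun j _ => Nat.zero_le _) (Finset.mem_univ i)
        omega
      exact hg (Finset.gcd_eq_zero_iff.mpr fun i hi => this i hi)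
  have hKpos : 0 < K := by
    rcases Nat.eq_zero_or_pos K with h0 | h; swap
    · exact h
    · rw [h0, Nat.mul_zero] at hKA; omega
  have hgB : g ∣ C * K * A := Dvd.dvd.mul_left hgA _
  obtain ⟨J, hJ⟩ : g ∣ m - C * K * A := Nat.dvd_sub hgm hgB
  have hm' : m = C * K * A + g * J := by omega
  set q := J / K with hq
  set r := J % K with hr
  have hrK : r < K := Nat.mod_lt _ hKpos
  have hJqr : K * q + r = J := Nat.div_add_mod J K
  have hxnn : ∀ i, 0 ≤ (C * K + q : ℤ) + r * c i := by
    intro i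
    have h1 : (r : ℤ) * c i ≥ -(r * (c i).natAbs) := by
      nlinarith [Int.natCast_nonneg r, neg_abs_le (c i), abs_nonneg (c i),
        mul_le_mul_of_nonneg_left (neg_abs_le (c i)) (Int.natCast_nonneg r),
        (Int.abs_eq_natAbs (c i))]
    have h3 : (r : ℤ) * (c i).natAbs ≤ (K : ℤ) * C := by
      have h5 : (r : ℤ) ≤ K := by exact_mod_cast hrK.le
      have h4 : ((c i).natAbs : ℤ) ≤ C := by exact_mod_cast hcC i
      nlinarith [Int.natCast_nonneg r, Int.natCast_nonneg (c i).natAbs]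
    have hq0 : (0 : ℤ) ≤ q := Int.natCast_nonneg q
    nlinarith
  refine ⟨fun i => ((C * K + q : ℤ) + r * c i).toNat, ?_⟩
  have key : ((∑ i, ((C * K + q : ℤ) + r * c i).toNat * a i : ℕ) : ℤ) = (m : ℤ) := by
    push_cast
    have hcongr : ∀ i ∈ Finset.univ, (((C * K + q : ℤ) + r * c i).toNat : ℤ) * (a i : ℤ)
        = ((C * K + q : ℤ) + r * c i) * (a i : ℤ) := by
      intro i _
      rw [Int.toNat_of_nonneg (hxnn i)]
    rw [Finset.sum_congr rfl hcongr]
    have expand : ∑ i, ((C * K + q : ℤ) + (r : ℤ) * c i) * (a i : ℤ)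
        = (C * K + q : ℤ) * (∑ i, (a i : ℤ)) + (r : ℤ) * ∑ i, c i * (a i : ℤ) := by
      rw [Finset.mul_sum, Finset.mul_sum, ← Finset.sum_add_distrib]
      exact Finset.sum_congr rfl fun i _ => by ring
    rw [expand, hc]
    have hAZ : (∑ i, (a i : ℤ)) = (A : ℤ) := by push_cast [hA]; rfl
    rw [hAZ]
    have hmz : (m : ℤ) = C * K * A + g * (K * q + r) := by
      rw [hm', ← hJqr]
      push_cast
      ring
    have hgKA : (g : ℤ) * K = A := by exact_mod_cast hKA
    rw [hmz]
    linear_combination (-(q : ℤ)) * hgKA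
  exact_mod_cast key

/-- **Lemma 4.9(i) (reduction to smaller regularity index).**
Assume Conjecture 4.11 holds for all `h'`-regular pairs of codimension at most `c` with
`h' < h`.  If `(d;a)` is an `h`-regular pair with `c ≤ n`, `aᵢ ∤ h` for all `i`, and
there is a prime `p ∣ h` with `δ̄(p) := δ(d;a) - δ(d(p);a(p)) ≤ 0`, then
`δ(d;a) ≥ F^h(a₀,…,aₙ)`. -/
theorem reduction_lemma_i (h c : ℕ) (hh : 2 ≤ h) (hc : 1 ≤ c)
    (IH : ∀ (h' c' n' : ℕ), 0 < h' → h' < h → 1 ≤ c' → c' ≤ c → c' ≤ n' →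
      ∀ (d' : Fin c' → ℕ) (a' : Fin (n' + 1) → ℕ),
        (∀ j, 0 < d' j) → (∀ i, 0 < a' i) → IsHRegularPair h' d' a' →
        (∀ i, ¬ a' i ∣ h') → deltaPair d' a' ≥ frobNum h' a')
    (n : ℕ) (hcn : c ≤ n)
    (d : Fin c → ℕ) (a : Fin (n + 1) → ℕ)
    (hd : ∀ j, 0 < d j) (ha : ∀ i, 0 < a i)
    (hreg : IsHRegularPair h d a) (hnd : ∀ i, ¬ a i ∣ h)
    (p : ℕ) (hp : p.Prime) (hph : p ∣ h)
    (hdelta : deltaPair d a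
        - deltaOn (Finset.univ.filter (fun j => p ∣ d j)) d
            (Finset.univ.filter (fun i => p ∣ a i)) a ≤ 0) :
    deltaPair d a ≥ frobNum h a := by
  classical
  -- basic facts about p and h' = h / p
  have hppos : 0 < p := hp.pos
  have hp2 : 2 ≤ p := hp.two_le
  set h' := h / p with hh'def
  have hph' : h = p * h' := (Nat.mul_div_cancel' hph).symm
  have h'pos : 0 < h' := by
    rcases Nat.eq_zero_or_pos h' with h0 | h1
    · rw [h0, Nat.mul_zero] at hph'; omega
    · exact h1
  have h'lt : h' < h := by
    rw [hph']; nlinarith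
  -- the quotient pair
  set d' : Fin c → ℕ := fun j => if p ∣ d j then d j / p else d j with hd'def
  set a' : Fin (n + 1) → ℕ := fun i => if p ∣ a i then a i / p else a i with ha'def
  have hd'mul : ∀ j, p ∣ d j → p * d' j = d j := by
    intro j hj; simp only [hd'def, if_pos hj]; exact Nat.mul_div_cancel' hj
  have ha'mul : ∀ i, p ∣ a i → p * a' i = a i := by
    intro i hi; simp only [ha'def, if_pos hi]; exact Nat.mul_div_cancel' hi
  have hd'eq : ∀ j, ¬ p ∣ d j → d' j = d j := by
    intro j hj; simp only [hd'def, if_neg hj]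
  have ha'eq : ∀ i, ¬ p ∣ a i → a' i = a i := by
    intro i hi; simp only [ha'def, if_neg hi]
  have ha'dvd : ∀ i, a' i ∣ a i := by
    intro i
    by_cases hi : p ∣ a i
    · simp only [ha'def, if_pos hi]; exact Nat.div_dvd_of_dvd hi
    · simp only [ha'def, if_neg hi]; exact dvd_rfl
  have hd'pos : ∀ j, 0 < d' j := by
    intro j
    by_cases hj : p ∣ d j
    · have := hd'mul j hj
      rcases Nat.eq_zero_or_pos (d' j) with h0 | h1
      · exfalso; rw [h0, Nat.mul_zero] at this; exact absurd this.symm (hd j).ne'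
      · exact h1
    · rw [hd'eq j hj]; exact hd j
  have ha'pos : ∀ i, 0 < a' i := by
    intro i
    by_cases hi : p ∣ a i
    · have := ha'mul i hi
      rcases Nat.eq_zero_or_pos (a' i) with h0 | h1
      · exfalso; rw [h0, Nat.mul_zero] at this; exact absurd this.symm (ha i).ne'
      · exact h1
    · rw [ha'eq i hi]; exact ha i
  have hnd' : ∀ i, ¬ a' i ∣ h' := by
    intro i hdvd
    by_cases hi : p ∣ a i
    · apply hnd i
      have := mul_dvd_mul_left p hdvd
      rwa [ha'mul i hi, ← hph'] at this
    · apply hnd i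
      rw [ha'eq i hi] at hdvd
      exact hdvd.trans ⟨p, by rw [hph']; ring⟩
  -- h'-regularity of the quotient pair
  have hreg' : IsHRegularPair h' d' a' := by
    intro I _ hIne hb'
    set b' := I.gcd a' with hb'def
    have hb'b : b' ∣ I.gcd a :=
      Finset.dvd_gcd fun i hi => (Finset.gcd_dvd hi).trans (ha'dvd i)
    have hbpos : 0 < I.gcd a := by
      rcases Nat.eq_zero_or_pos (I.gcd a) with h0 | h1
      · exfalso
        obtain ⟨i, hi⟩ := hIne
        exact absurd (Finset.gcd_eq_zero_iff.mp h0 i hi) (ha i).ne'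
      · exact h1
    have hb1 : 1 < I.gcd a := lt_of_lt_of_le hb' (Nat.le_of_dvd hbpos hb'b)
    have hkey : (∀ i ∈ I, p ∣ a i) → p * b' ∣ I.gcd a := by
      intro hallI
      refine Finset.dvd_gcd fun i hi => ?_
      have h1 : p * b' ∣ p * a' i := mul_dvd_mul_left p (Finset.gcd_dvd hi)
      rwa [ha'mul i (hallI i hi)] at h1
    rcases hreg I (Finset.subset_univ I) hIne hb1 with ⟨P, _, hP2, hP3⟩ | hbh
    · left
      refine ⟨P, Finset.subset_univ P, hP2, fun j hj => ?_⟩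
      by_cases hallI : ∀ i ∈ I, p ∣ a i
      · have hpb' : p * b' ∣ d j := (hkey hallI).trans (hP3 j hj)
        have hpd : p ∣ d j := (dvd_mul_right p b').trans hpb'
        rw [← hd'mul j hpd] at hpb'
        exact (Nat.mul_dvd_mul_iff_left hppos).mp hpb'
      · push_neg at hallI
        obtain ⟨i₀, hi₀I, hi₀⟩ := hallI
        have hpnb' : ¬ p ∣ b' := by
          intro hpb
          refine hi₀ (hpb.trans ?_)
          have := Finset.gcd_dvd (f := a') hi₀I
          rwa [← hb'def, ha'eq i₀ hi₀] at this
        have hcop : Nat.Coprime b' p :=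
          Nat.coprime_comm.mp ((Nat.Prime.coprime_iff_not_dvd hp).mpr hpnb')
        have hbd : b' ∣ d j := hb'b.trans (hP3 j hj)
        by_cases hpdj : p ∣ d j
        · rw [← hd'mul j hpdj] at hbd
          exact hcop.dvd_of_dvd_mul_left hbd
        · rw [hd'eq j hpdj]; exact hbd
    · right
      by_cases hallI : ∀ i ∈ I, p ∣ a i
      · have h1 : p * b' ∣ p * h' := by
          rw [← hph']
          exact (hkey hallI).trans hbh
        exact (Nat.mul_dvd_mul_iff_left hppos).mp h1
      · push_neg at hallI
        obtain ⟨i₀, hi₀I, hi₀⟩ := hallI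
        have hpnb' : ¬ p ∣ b' := by
          intro hpb
          refine hi₀ (hpb.trans ?_)
          have := Finset.gcd_dvd (f := a') hi₀I
          rwa [← hb'def, ha'eq i₀ hi₀] at this
        have hcop : Nat.Coprime b' p :=
          Nat.coprime_comm.mp ((Nat.Prime.coprime_iff_not_dvd hp).mpr hpnb')
        have hbd : b' ∣ p * h' := by rw [← hph']; exact hb'b.trans hbh
        exact hcop.dvd_of_dvd_mul_left hbd
  -- apply the induction hypothesis
  have hIH : deltaPair d' a' ≥ frobNum h' a' :=
    IH h' c n h'pos h'lt hc le_rfl hcn d' a' hd'pos ha'pos hreg' hnd'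
  -- comparison of amplitudes:  p * δ' ≤ δ
  have hsum_d : ∑ j, (d j : ℤ) = ∑ j ∈ Finset.univ.filter (fun j => p ∣ d j), (d j : ℤ)
      + ∑ j ∈ Finset.univ.filter (fun j => ¬ p ∣ d j), (d j : ℤ) :=
    (Finset.sum_filter_add_sum_filter_not _ _ _).symm
  have hsum_a : ∑ i, (a i : ℤ) = ∑ i ∈ Finset.univ.filter (fun i => p ∣ a i), (a i : ℤ)
      + ∑ i ∈ Finset.univ.filter (fun i => ¬ p ∣ a i), (a i : ℤ) :=
    (Finset.sum_filter_add_sum_filter_not _ _ _).symm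
  set X := ∑ j ∈ Finset.univ.filter (fun j => ¬ p ∣ d j), (d j : ℤ) with hX
  set Y := ∑ i ∈ Finset.univ.filter (fun i => ¬ p ∣ a i), (a i : ℤ) with hY
  have hXY : X - Y ≤ 0 := by
    have := hdelta
    unfold deltaPair deltaOn at this
    rw [hsum_d, hsum_a] at this
    linarith
  have hsum_d' : (p : ℤ) * ∑ j, (d' j : ℤ)
      = ∑ j ∈ Finset.univ.filter (fun j => p ∣ d j), (d j : ℤ) + p * X := by
    rw [Finset.mul_sum, ← Finset.sum_filter_add_sum_filter_not Finset.univ (fun j => p ∣ d j)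
      (fun j => (p : ℤ) * (d' j : ℤ)), hX, Finset.mul_sum]
    congr 1
    · refine Finset.sum_congr rfl fun j hj => ?_
      have hpj : p ∣ d j := (Finset.mem_filter.mp hj).2
      exact_mod_cast congrArg (fun t : ℕ => (t : ℤ)) (hd'mul j hpj)
    · refine Finset.sum_congr rfl fun j hj => ?_
      have hpj : ¬ p ∣ d j := (Finset.mem_filter.mp hj).2
      rw [hd'eq j hpj]
  have hsum_a' : (p : ℤ) * ∑ i, (a' i : ℤ)
      = ∑ i ∈ Finset.univ.filter (fun i => p ∣ a i), (a i : ℤ) + p * Y := by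
    rw [Finset.mul_sum, ← Finset.sum_filter_add_sum_filter_not Finset.univ (fun i => p ∣ a i)
      (fun i => (p : ℤ) * (a' i : ℤ)), hY, Finset.mul_sum]
    congr 1
    · refine Finset.sum_congr rfl fun i hi => ?_
      have hpi : p ∣ a i := (Finset.mem_filter.mp hi).2
      exact_mod_cast congrArg (fun t : ℕ => (t : ℤ)) (ha'mul i hpi)
    · refine Finset.sum_congr rfl fun i hi => ?_
      have hpi : ¬ p ∣ a i := (Finset.mem_filter.mp hi).2
      rw [ha'eq i hpi]
  have hcomp : (p : ℤ) * deltaPair d' a' ≤ deltaPair d a := by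
    unfold deltaPair deltaOn
    have hp1 : (1 : ℤ) ≤ p := by exact_mod_cast hppos
    have e1 : (p : ℤ) * ((∑ j, (d' j : ℤ)) - ∑ i, (a' i : ℤ))
        = (∑ j ∈ Finset.univ.filter (fun j => p ∣ d j), (d j : ℤ) + p * X)
          - (∑ i ∈ Finset.univ.filter (fun i => p ∣ a i), (a i : ℤ) + p * Y) := by
      rw [mul_sub, hsum_d', hsum_a']
    rw [e1, hsum_d, hsum_a]
    nlinarith [hXY, hp1]
  -- conclude
  rw [ge_iff_le, frobNum, frobOn]
  -- the set is nonempty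
  set L := Nat.lcm ((Finset.univ : Finset (Fin (n + 1))).gcd a) h with hL
  have hgpos : 0 < (Finset.univ : Finset (Fin (n + 1))).gcd a := by
    rcases Nat.eq_zero_or_pos _ with h0 | h1
    · exact absurd (Finset.gcd_eq_zero_iff.mp h0 0 (Finset.mem_univ 0)) (ha 0).ne'
    · exact h1
  have hLpos : 0 < L := Nat.pos_of_ne_zero (Nat.lcm_ne_zero hgpos.ne' (by omega))
  apply csSup_le
  · refine ⟨-(L : ℤ), dvd_neg.mpr dvd_rfl, ?_⟩
    rintro ⟨x, hx⟩
    have h0 : (0 : ℤ) ≤ ((∑ i, x i * a i : ℕ) : ℤ) := Int.natCast_nonneg _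
    rw [hx] at h0
    have : (0 : ℤ) < (L : ℤ) := by exact_mod_cast hLpos
    linarith
  · rintro z ⟨hzdvd, hznrep⟩
    -- p divides z
    have hpz : (p : ℤ) ∣ z := by
      refine dvd_trans ?_ hzdvd
      exact_mod_cast hph.trans (Nat.dvd_lcm_right _ _)
    obtain ⟨w, hw⟩ := hpz
    have hpZ : (p : ℤ) ≠ 0 := by exact_mod_cast hppos.ne'
    -- w is in the Frobenius set for (h', a')
    set g'' := (Finset.univ : Finset (Fin (n + 1))).gcd a' with hg''
    have hg'w : (g'' : ℤ) ∣ w := by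
      by_cases hall : ∀ i, p ∣ a i
      · have hpg : p * g'' ∣ (Finset.univ : Finset (Fin (n + 1))).gcd a := by
          refine Finset.dvd_gcd fun i _ => ?_
          have h1 : p * g'' ∣ p * a' i := mul_dvd_mul_left p (Finset.gcd_dvd (Finset.mem_univ i))
          rwa [ha'mul i (hall i)] at h1
        have h2 : ((p * g'' : ℕ) : ℤ) ∣ z :=
          dvd_trans (by exact_mod_cast hpg.trans (Nat.dvd_lcm_left _ _)) hzdvd
        rw [hw] at h2
        push_cast at h2
        exact (mul_dvd_mul_iff_left hpZ).mp h2
      · push_neg at hall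
        obtain ⟨i₀, hi₀⟩ := hall
        have hgg : g'' ∣ (Finset.univ : Finset (Fin (n + 1))).gcd a :=
          Finset.dvd_gcd fun i _ => (Finset.gcd_dvd (Finset.mem_univ i)).trans (ha'dvd i)
        have h2 : (g'' : ℤ) ∣ z :=
          dvd_trans (by exact_mod_cast hgg.trans (Nat.dvd_lcm_left _ _)) hzdvd
        have hpng : ¬ p ∣ g'' := by
          intro hpg
          refine hi₀ (hpg.trans ?_)
          have := Finset.gcd_dvd (f := a') (Finset.mem_univ i₀)
          rwa [← hg'', ha'eq i₀ hi₀] at this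
        have hcop : IsCoprime (g'' : ℤ) (p : ℤ) :=
          Int.isCoprime_iff_gcd_eq_one.mpr (by
            exact_mod_cast Nat.coprime_comm.mp ((Nat.Prime.coprime_iff_not_dvd hp).mpr hpng))
        rw [hw] at h2
        exact hcop.dvd_of_dvd_mul_left h2
    have hh'w : (h' : ℤ) ∣ w := by
      have h2 : ((h : ℕ) : ℤ) ∣ z :=
        dvd_trans (by exact_mod_cast Nat.dvd_lcm_right _ _) hzdvd
      rw [hw, hph'] at h2
      push_cast at h2
      exact (mul_dvd_mul_iff_left hpZ).mp h2
    have hwdvd : ((Nat.lcm g'' h' : ℕ) : ℤ) ∣ w := by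
      have := Int.lcm_dvd (Int.dvd_natAbs.mpr hg'w) (Int.dvd_natAbs.mpr hh'w)
      have h3 : g''.lcm h' ∣ w.natAbs := by simpa [Int.lcm, Int.natAbs_natCast] using this
      exact Int.ofNat_dvd_left.mpr h3
    have hwnrep : ¬ ∃ x : Fin (n + 1) → ℕ, ((∑ i, x i * a' i : ℕ) : ℤ) = w := by
      rintro ⟨x, hx⟩
      apply hznrep
      refine ⟨fun i => if p ∣ a i then x i else p * x i, ?_⟩
      have hsum : ∑ i, (if p ∣ a i then x i else p * x i) * a i = p * ∑ i, x i * a' i := by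
        rw [Finset.mul_sum]
        refine Finset.sum_congr rfl fun i _ => ?_
        by_cases hi : p ∣ a i
        · rw [if_pos hi, ← ha'mul i hi]; ring
        · rw [if_neg hi, ha'eq i hi]; ring
      rw [hsum, hw, ← hx]
      push_cast
      ring
    -- w ≤ frobNum h' a'
    have hbdd : BddAbove {z : ℤ | ((Nat.lcm g'' h' : ℕ) : ℤ) ∣ z ∧
        ¬ ∃ x : Fin (n + 1) → ℕ, ((∑ i, x i * a' i : ℕ) : ℤ) = z} := by
      obtain ⟨B, hB⟩ := rep_of_large' a'
      refine ⟨(B : ℤ), fun w' hw' => ?_⟩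
      by_contra hlt
      push_neg at hlt
      have hw'0 : 0 ≤ w' := le_trans (Int.natCast_nonneg B) hlt.le
      obtain ⟨m, rfl⟩ := Int.eq_ofNat_of_zero_le hw'0
      have hgm : g'' ∣ m := by
        have h1 : (g'' : ℤ) ∣ (m : ℤ) :=
          dvd_trans (by exact_mod_cast Nat.dvd_lcm_left g'' h') hw'.1
        exact_mod_cast h1
      have hBm : B ≤ m := by exact_mod_cast hlt.le
      obtain ⟨x, hx⟩ := hB m hgm hBm
      exact hw'.2 ⟨x, by exact_mod_cast congrArg (fun t : ℕ => (t : ℤ)) hx⟩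
    have hwmem : w ∈ {z : ℤ | ((Nat.lcm g'' h' : ℕ) : ℤ) ∣ z ∧
        ¬ ∃ x : Fin (n + 1) → ℕ, ((∑ i, x i * a' i : ℕ) : ℤ) = z} := ⟨hwdvd, hwnrep⟩
    have hwle : w ≤ frobNum h' a' := by
      rw [frobNum, frobOn]
      exact le_csSup hbdd hwmem
    have hwd : w ≤ deltaPair d' a' := le_trans hwle hIH
    calc z = (p : ℤ) * w := hw
      _ ≤ (p : ℤ) * deltaPair d' a' := by
          apply mul_le_mul_of_nonneg_left hwd
          exact_mod_cast Nat.zero_le p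
      _ ≤ deltaPair d a := hcomp
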